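/- Let n ≥ 1 and let x ∈ {0,1}^n. For deletion probability q = 1/2, the expected total number of runs in a trace of x satisfies E[R_x] = (1/2)·(n − α_x), where α_x = Σ_{i,j ∈ S̄_x, i<j} (1/2)^{j−i} + Σ_{i,j ∈ S_x, i<j} (1/2)^{j−i}. -/

import Mathlib

open Finset

/-- Number of deletions in a deletion pattern (number of `1`s in `ω`). -/
def wt {n : ℕ} (ω : Fin n → Bool) : ℕ := (univ.filter fun j => ω j = true).card

/-- Trace of `x` under deletion pattern `ω`: the subsequence of bits `x j`
at the positions `j` with `ω j = 0`, in increasing order of position. -/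
def trc {n : ℕ} (x ω : Fin n → Bool) : List Bool :=
  ((List.finRange n).filter fun j => ω j = false).map x

/-- Total number of runs (maximal blocks of equal bits) in a binary list. -/
def numRuns (l : List Bool) : ℕ := (l.destutter (· ≠ ·)).length

/-- Number of runs of `0`s in a binary list. -/
def numZeroRuns (l : List Bool) : ℕ := (l.destutter (· ≠ ·)).count false

/-- Number of runs of `1`s in a binary list. -/
def numOneRuns (l : List Bool) : ℕ := (l.destutter (· ≠ ·)).count true

/-- The coefficient `α_x`. -/
noncomputable def alphaC {n : ℕ} (x : Fin n → Bool) : ℝ :=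
  (∑ i ∈ univ.filter (fun i : Fin n => x i = false),
     ∑ j ∈ univ.filter (fun j : Fin n => x j = false ∧ i < j),
       ((1:ℝ)/2) ^ ((j : ℕ) - (i : ℕ)))
  + ∑ i ∈ univ.filter (fun i : Fin n => x i = true),
      ∑ j ∈ univ.filter (fun j : Fin n => x j = true ∧ i < j),
        ((1:ℝ)/2) ^ ((j : ℕ) - (i : ℕ))

/-- The coefficient `β_x`. -/
noncomputable def betaC {n : ℕ} (x : Fin n → Bool) : ℝ :=
  (∑ i ∈ univ.filter (fun i : Fin n => x i = false),
     ∑ j ∈ univ.filter (fun j : Fin n => x j = false ∧ i < j),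
       ((1:ℝ)/2) ^ (n - ((j : ℕ) - (i : ℕ))))
  + ∑ i ∈ univ.filter (fun i : Fin n => x i = true),
      ∑ j ∈ univ.filter (fun j : Fin n => x j = true ∧ i < j),
        ((1:ℝ)/2) ^ (n - ((j : ℕ) - (i : ℕ)))

/-- The coefficient `γ_x`. -/
noncomputable def gammaC {n : ℕ} (x : Fin n → Bool) : ℝ :=
  (∑ i ∈ univ.filter (fun i : Fin n => x i = false),
     ∑ j ∈ univ.filter (fun j : Fin n => x j = true ∧ i < j),
       ((1:ℝ)/2) ^ (n - ((j : ℕ) - (i : ℕ))))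
  + ∑ i ∈ univ.filter (fun i : Fin n => x i = true),
      ∑ j ∈ univ.filter (fun j : Fin n => x j = false ∧ i < j),
        ((1:ℝ)/2) ^ (n - ((j : ℕ) - (i : ℕ)))

/-- The coefficient `δ_x`. -/
noncomputable def deltaC {n : ℕ} (x : Fin n → Bool) : ℝ :=
  (∑ i ∈ univ.filter (fun i : Fin n => x i = false),
     ∑ j ∈ univ.filter (fun j : Fin n => x j = true ∧ i < j),
       ((1:ℝ)/2) ^ ((j : ℕ) - (i : ℕ)))
  + ∑ i ∈ univ.filter (fun i : Fin n => x i = true),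
      ∑ j ∈ univ.filter (fun j : Fin n => x j = false ∧ i < j),
        ((1:ℝ)/2) ^ ((j : ℕ) - (i : ℕ))

section Aux

lemma numRuns_nil : numRuns ([] : List Bool) = 0 := rfl

lemma numRuns_cons (a : Bool) (l : List Bool) :
    numRuns (a :: l) = (if l.head? = some a then 0 else 1) + numRuns l := by
  cases l with
  | nil => simp [numRuns]
  | cons b t =>
    rcases eq_or_ne b a with h | h
    · subst h
      simp [numRuns, List.destutter, List.destutter']
    · simp [numRuns, List.destutter, List.destutter', h, Ne.symm h, Nat.add_comm]

lemma trc_cons {n : ℕ} (a : Bool) (x : Fin n → Bool) (d : Bool) (ω : Fin n → Bool) :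
    trc (Fin.cons a x) (Fin.cons d ω ) = if d then trc x ω else a :: trc x ω := by
  simp only [trc, List.finRange_succ, List.filter_cons, List.filter_map,
    Fin.cons_zero, Fin.cons_succ]
  cases d <;> simp [List.map_map, Function.comp_def, Fin.cons_succ]

def consEquiv (n : ℕ) : Bool × (Fin n → Bool) ≃ (Fin (n+1) → Bool) where
  toFun p := Fin.cons p.1 p.2
  invFun ω := (ω 0, Fin.tail ω)
  left_inv := by rintro ⟨b, ω⟩; simp
  right_inv := fun ω => Fin.cons_self_tail ω

lemma sum_pi_succ {M : Type*} [AddCommMonoid M] {n : ℕ} (f : (Fin (n+1) → Bool) → M) :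
    ∑ ω : Fin (n+1) → Bool, f ω = ∑ b : Bool, ∑ ω : Fin n → Bool, f (Fin.cons b ω) := by
  rw [← (consEquiv n).sum_comp f, Fintype.sum_prod_type]
  rfl

lemma geo (n : ℕ) : ∑ i : Fin n, ((1:ℝ)/2)^((i:ℕ)+1) = 1 - ((1:ℝ)/2)^n := by
  induction n with
  | zero => simp
  | succ n ih =>
    rw [Fin.sum_univ_castSucc]
    simp only [Fin.coe_castSucc, Fin.val_last, ih]
    ring

noncomputable def Acoef {n : ℕ} (x : Fin n → Bool) : ℝ :=
  ∑ i : Fin n, ∑ j : Fin n, if x i = x j ∧ i < j then ((1:ℝ)/2) ^ ((j:ℕ) - (i:ℕ)) else 0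

lemma alphaC_eq {n : ℕ} (x : Fin n → Bool) : alphaC x = Acoef x := by
  rw [alphaC, Acoef]
  simp only [Finset.sum_filter]
  rw [← Finset.sum_add_distrib]
  refine Finset.sum_congr rfl fun i _ => ?_
  cases hxi : x i <;> simp only [hxi, if_true, if_false, reduceCtorEq, add_zero, zero_add, if_pos rfl] <;>
    exact Finset.sum_congr rfl fun j _ => by cases hxj : x j <;> simp [hxj]

lemma acoef_cons {n : ℕ} (a : Bool) (z : Fin n → Bool) :
    Acoef (Fin.cons a z) = Acoef z + ∑ j : Fin n, (if z j = a then ((1:ℝ)/2)^((j:ℕ)+1) else 0) := by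
  rw [Acoef, Acoef, Fin.sum_univ_succ, add_comm]
  congr 1
  · refine Finset.sum_congr rfl fun i _ => ?_
    rw [Fin.sum_univ_succ]
    simp [Fin.succ_lt_succ_iff, Nat.succ_sub_succ]
  · rw [Fin.sum_univ_succ]
    simp [Fin.succ_pos, eq_comm]

lemma gsum : ∀ (n : ℕ) (y : Fin n → Bool) (a : Bool),
    (∑ ω : Fin n → Bool, if (trc y ω).head? = some a then (0:ℝ) else 1) =
      1 + ∑ i : Fin n, (if y i = a then (0:ℝ) else (2:ℝ)^n * ((1:ℝ)/2)^((i:ℕ)+1)) := by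
  intro n
  induction n with
  | zero => intro y a; simp [trc]
  | succ n ih =>
    intro y a
    rw [← Fin.cons_self_tail y, sum_pi_succ, Fintype.sum_bool]
    simp only [trc_cons, reduceIte]
    rw [ih (Fin.tail y) a]
    have hcard : (Fintype.card (Fin n → Bool) : ℝ) = 2^n := by
      simp [Fintype.card_fun]
    have h2 : (∑ _ω : Fin n → Bool, if (y 0 : Bool) = a then (0:ℝ) else 1)
        = if (y 0 : Bool) = a then (0:ℝ) else 2^n := by
      rw [Finset.sum_const, card_univ, nsmul_eq_mul, hcard]
      by_cases h : (y 0 : Bool) = a <;> simp [h]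
    simp only [Bool.false_eq_true, if_false, List.head?_cons, Option.some_inj]
    rw [h2, Fin.sum_univ_succ, Fin.cons_zero]
    have hx : ∀ k : ℕ, (2:ℝ)^(n+1) * ((1:ℝ)/2)^(k+1+1) = 2^n * ((1:ℝ)/2)^(k+1) := by
      intro k; rw [pow_succ, pow_succ]; ring
    simp only [Fin.cons_succ, Fin.val_succ, Fin.val_zero, Fin.tail]
    have hS : (∑ i : Fin n, if y i.succ = a then (0:ℝ) else (2:ℝ)^(n+1) * ((1:ℝ)/2)^((i:ℕ)+1+1))
        = ∑ i : Fin n, (if y i.succ = a then (0:ℝ) else (2:ℝ)^n * ((1:ℝ)/2)^((i:ℕ)+1)) := by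
      refine Finset.sum_congr rfl fun i _ => ?_
      by_cases h : y i.succ = a
      · simp [h]
      · rw [if_neg h, if_neg h, hx]
    rw [hS]
    by_cases h0 : y 0 = a
    · simp only [h0, if_pos rfl, if_true]
      ring
    · rw [if_neg h0, if_neg h0]
      rw [show (2:ℝ)^(n+1) * ((1:ℝ)/2)^((0:ℕ)+1) = 2^n from by rw [pow_succ]; ring]
      ring

lemma half_pow_mul (n : ℕ) : ((1:ℝ)/2)^n * 2^n = 1 := by
  rw [one_div, inv_pow, inv_mul_cancel₀ (by positivity)]

lemma keyS : ∀ (n : ℕ) (x : Fin n → Bool),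
    (∑ ω : Fin n → Bool, (numRuns (trc x ω) : ℝ)) = (2:ℝ)^n * ((n:ℝ) - Acoef x) / 2 := by
  intro n
  induction n with
  | zero => intro x; simp [trc, numRuns, Acoef]
  | succ n ih =>
    intro x
    rw [← Fin.cons_self_tail x, sum_pi_succ, Fintype.sum_bool]
    simp only [trc_cons, reduceIte, Bool.false_eq_true, if_false]
    have hc : ∀ l : List Bool, ((numRuns ((x 0) :: l) : ℝ))
        = (if l.head? = some (x 0) then (0:ℝ) else 1) + numRuns l := by
      intro l
      rw [numRuns_cons]
      push_cast
      split <;> simp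
    simp only [hc]
    rw [Finset.sum_add_distrib, ih (Fin.tail x), gsum n (Fin.tail x) (x 0),
      acoef_cons (x 0) (Fin.tail x)]
    have split : (∑ i : Fin n, if Fin.tail x i = x 0 then (0:ℝ) else (2:ℝ)^n * ((1:ℝ)/2)^((i:ℕ)+1))
        = ((2:ℝ)^n - 1) - 2^n * (∑ j : Fin n, if Fin.tail x j = x 0 then ((1:ℝ)/2)^((j:ℕ)+1) else 0) := by
      have h1 : ∀ i : Fin n, (if Fin.tail x i = x 0 then (0:ℝ) else (2:ℝ)^n * ((1:ℝ)/2)^((i:ℕ)+1))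
          = (2:ℝ)^n * ((1:ℝ)/2)^((i:ℕ)+1)
            - (2:ℝ)^n * (if Fin.tail x i = x 0 then ((1:ℝ)/2)^((i:ℕ)+1) else 0) := by
        intro i; by_cases h : Fin.tail x i = x 0 <;> simp [h]
      rw [Finset.sum_congr rfl fun i _ => h1 i, Finset.sum_sub_distrib,
        ← Finset.mul_sum, ← Finset.mul_sum, geo]
      have := half_pow_mul n
      ring_nf
      ring_nf at this
      nlinarith [this]
    rw [split]
    push_cast
    ring

end Aux

/-- For deletion probability `q = 1/2`, the expected total number of runs in a
trace of `x` equals `(1/2) * (n - α_x)`. -/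

theorem expected_total_runs_half (n : ℕ) (hn : 1 ≤ n) (x : Fin n → Bool) :
    (∑ ω : Fin n → Bool,
        ((1:ℝ)/2) ^ wt ω * (1 - (1:ℝ)/2) ^ (n - wt ω) * (numRuns (trc x ω) : ℝ)) =
      (1/2) * ((n : ℝ) - alphaC x) := by
  have hwt : ∀ ω : Fin n → Bool,
      ((1:ℝ)/2) ^ wt ω * (1 - (1:ℝ)/2) ^ (n - wt ω) = ((1:ℝ)/2)^n := by
    intro ω
    have h1 : (1:ℝ) - 1/2 = 1/2 := by norm_num
    have h2 : wt ω ≤ n := by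
      have := Finset.card_filter_le (univ : Finset (Fin n)) (fun j => ω j = true)
      simpa [wt] using this
    rw [h1, ← pow_add, Nat.add_sub_cancel' h2]
  have : (∑ ω : Fin n → Bool,
        ((1:ℝ)/2) ^ wt ω * (1 - (1:ℝ)/2) ^ (n - wt ω) * (numRuns (trc x ω) : ℝ))
      = ((1:ℝ)/2)^n * ∑ ω : Fin n → Bool, (numRuns (trc x ω) : ℝ) := by
    rw [Finset.mul_sum]
    exact Finset.sum_congr rfl fun ω _ => by rw [hwt ω]
  rw [this, keyS n x, alphaC_eq]
  have h := half_pow_mul n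
  linear_combination (((n:ℝ) - Acoef x)/2) * h
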